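/- Let S be the unilateral shift on the complex Banach space c₀ of null sequences, defined by (S x)(0) = 0 and (S x)(n+1) = x(n). Then for every x ∈ c₀ and every ε > 0 there exists a surjective linear isometry L of c₀ with ‖S x − L x‖ < ε, yet S is not surjective. Consequently, the isometry group of c₀ is not topologically reflexive. -/
import Mathlib


open ZeroAtInfty Filter Topology

namespace C0ShiftAux

/-- Build an element of `C₀(ℕ, ℂ)` from a sequence tending to `0` along `cofinite`. -/
noncomputable def mkC0 (f : ℕ → ℂ) (h : Tendsto f cofinite (𝓝 0)) : C₀(ℕ, ℂ) :=
  ⟨⟨f, continuous_of_discreteTopology⟩, by rwa [Filter.cocompact_eq_cofinite]⟩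

@[simp] lemma mkC0_apply (f : ℕ → ℂ) (h : Tendsto f cofinite (𝓝 0)) (n : ℕ) :
    mkC0 f h n = f n := rfl

lemma zero_at_cofinite (x : C₀(ℕ, ℂ)) : Tendsto (fun n => x n) cofinite (𝓝 0) := by
  have := zero_at_infty x
  rwa [Filter.cocompact_eq_cofinite] at this

lemma norm_apply_le (x : C₀(ℕ, ℂ)) (n : ℕ) : ‖x n‖ ≤ ‖x‖ := by
  rw [← ZeroAtInftyContinuousMap.norm_toBCF_eq_norm]
  exact BoundedContinuousFunction.norm_coe_le_norm x.toBCF n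

lemma norm_le_of (x : C₀(ℕ, ℂ)) {C : ℝ} (hC : 0 ≤ C) (h : ∀ n, ‖x n‖ ≤ C) : ‖x‖ ≤ C := by
  rw [← ZeroAtInftyContinuousMap.norm_toBCF_eq_norm]
  exact (BoundedContinuousFunction.norm_le hC).2 h

/-- Composition with a permutation of `ℕ`, as a linear isometry equivalence of `c₀`. -/
noncomputable def permEquiv (e : ℕ ≃ ℕ) : C₀(ℕ, ℂ) ≃ₗᵢ[ℂ] C₀(ℕ, ℂ) where
  toFun x := mkC0 (fun n => x (e n))
    ((zero_at_cofinite x).comp (e.injective.tendsto_cofinite))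
  invFun x := mkC0 (fun n => x (e.symm n))
    ((zero_at_cofinite x).comp (e.symm.injective.tendsto_cofinite))
  map_add' x y := by ext n; simp
  map_smul' c x := by ext n; simp
  left_inv x := by ext n; simp
  right_inv x := by ext n; simp
  norm_map' x := by
    refine le_antisymm (norm_le_of _ (norm_nonneg x) fun n => norm_apply_le x (e n)) ?_
    refine norm_le_of _ (norm_nonneg _) fun n => ?_
    have := norm_apply_le (mkC0 (fun n => x (e n))
      ((zero_at_cofinite x).comp (e.injective.tendsto_cofinite))) (e.symm n)
    simpa using this

lemma permEquiv_apply (e : ℕ ≃ ℕ) (x : C₀(ℕ, ℂ)) (n : ℕ) :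
    permEquiv e x n = x (e n) := rfl

/-- The shift sequence. -/
noncomputable def shiftC0 (x : C₀(ℕ, ℂ)) : C₀(ℕ, ℂ) :=
  mkC0 (fun n => if n = 0 then 0 else x (n - 1)) (by
    rw [Nat.cofinite_eq_atTop]
    have h1 : Tendsto (fun n : ℕ => x (n - 1)) atTop (𝓝 0) := by
      have hx := zero_at_cofinite x
      rw [Nat.cofinite_eq_atTop] at hx
      exact hx.comp (tendsto_sub_atTop_nat 1)
    refine h1.congr' ?_
    filter_upwards [eventually_ge_atTop 1] with n hn
    simp [Nat.one_le_iff_ne_zero.mp hn])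

lemma shiftC0_apply (x : C₀(ℕ, ℂ)) (n : ℕ) :
    shiftC0 x n = if n = 0 then 0 else x (n - 1) := rfl

/-- The shift as a continuous linear map. -/
noncomputable def shiftCLM : C₀(ℕ, ℂ) →L[ℂ] C₀(ℕ, ℂ) :=
  LinearMap.mkContinuous
    { toFun := shiftC0
      map_add' := fun x y => by
        ext n
        simp only [ZeroAtInftyContinuousMap.coe_add, Pi.add_apply, shiftC0_apply]
        split_ifs <;> simp
      map_smul' := fun c x => by
        ext n
        simp only [ZeroAtInftyContinuousMap.coe_smul, Pi.smul_apply, shiftC0_apply,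
          RingHom.id_apply]
        split_ifs <;> simp }
    1 (fun x => by
      rw [one_mul]
      refine norm_le_of _ (norm_nonneg x) fun n => ?_
      simp only [LinearMap.coe_mk, AddHom.coe_mk, shiftC0_apply]
      split_ifs
      · simpa using norm_nonneg x
      · exact norm_apply_le x _)

/-- The single function at `0`. -/
noncomputable def e0 : C₀(ℕ, ℂ) :=
  mkC0 (fun n => if n = 0 then 1 else 0) (by
    rw [Nat.cofinite_eq_atTop]
    refine tendsto_const_nhds.congr' ?_
    filter_upwards [eventually_ge_atTop 1] with n hn
    simp [Nat.one_le_iff_ne_zero.mp hn])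

/-- The cyclic permutation sending `0 ↦ N`, `n ↦ n-1` for `1 ≤ n ≤ N`, fixing `n > N`. -/
def cycPerm (N : ℕ) : ℕ ≃ ℕ where
  toFun n := if n = 0 then N else if n ≤ N then n - 1 else n
  invFun n := if n = N then 0 else if n < N then n + 1 else n
  left_inv n := by dsimp only; split_ifs <;> omega
  right_inv n := by
    dsimp only; split_ifs <;> first | omega | exact absurd rfl ‹_› | exact (‹False›).elim

end C0ShiftAux

open C0ShiftAux

/-- The unilateral shift S on c₀ (the complex null sequences), given by
(S x)(0) = 0 and (S x)(n+1) = x(n), is not surjective, yet for every x and ε > 0 there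
is a surjective linear isometry L of c₀ with ‖S x - L x‖ < ε.  Hence the isometry group
of c₀ is not topologically reflexive. -/
theorem shift_witnesses_c0_isometry_group_not_topologically_reflexive :
    ∃ S : C₀(ℕ, ℂ) →L[ℂ] C₀(ℕ, ℂ),
      (∀ x : C₀(ℕ, ℂ), S x 0 = 0 ∧ ∀ n : ℕ, S x (n + 1) = x n) ∧
      (∀ (x : C₀(ℕ, ℂ)) (ε : ℝ), 0 < ε →
        ∃ L : C₀(ℕ, ℂ) ≃ₗᵢ[ℂ] C₀(ℕ, ℂ), ‖S x - L x‖ < ε) ∧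
      ¬ Function.Surjective S := by
  refine ⟨shiftCLM, fun x => ⟨rfl, fun n => by simp [shiftCLM, shiftC0_apply,
    LinearMap.mkContinuous_apply]⟩, ?_, ?_⟩
  · intro x ε hε
    -- choose N with ‖x m‖ < ε/3 for all m ≥ N
    have hx : Tendsto (fun n => ‖x n‖) atTop (𝓝 0) := by
      have := zero_at_cofinite x
      rw [Nat.cofinite_eq_atTop] at this
      simpa using this.norm
    have h3 : 0 < ε / 3 := by linarith
    obtain ⟨N, hN⟩ := (hx.eventually (eventually_lt_nhds h3)).exists_forall_of_atTop
    refine ⟨permEquiv (cycPerm N), ?_⟩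
    have key : ∀ n, ‖(shiftCLM x - permEquiv (cycPerm N) x) n‖ ≤ 2 * (ε / 3) := by
      intro n
      have happ : (shiftCLM x - permEquiv (cycPerm N) x) n
          = shiftC0 x n - x (cycPerm N n) := by
        simp only [ZeroAtInftyContinuousMap.coe_sub, Pi.sub_apply]
        rfl
      rw [happ, shiftC0_apply]
      rcases eq_or_ne n 0 with h0 | h0
      · subst h0
        have hc : cycPerm N 0 = N := rfl
        rw [if_pos rfl, zero_sub, norm_neg, hc]
        have := hN N le_rfl
        linarith
      · rw [if_neg h0]
        rcases le_or_gt n N with hn | hn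
        · have hc : cycPerm N n = n - 1 := by simp [cycPerm, h0, hn]
          rw [hc, sub_self, norm_zero]
          positivity
        · have hc : cycPerm N n = n := by
            simp only [cycPerm, Equiv.coe_fn_mk, if_neg h0, if_neg (by omega : ¬ n ≤ N)]
          rw [hc]
          have h1 : ‖x (n - 1)‖ < ε / 3 := hN _ (by omega)
          have h2 : ‖x n‖ < ε / 3 := hN _ (by omega)
          calc ‖x (n - 1) - x n‖ ≤ ‖x (n - 1)‖ + ‖x n‖ := norm_sub_le _ _
            _ ≤ 2 * (ε / 3) := by linarith
    have := norm_le_of _ (by positivity) key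
    linarith
  · intro hs
    obtain ⟨x, hx⟩ := hs e0
    have h0 : shiftCLM x 0 = 0 := rfl
    rw [hx] at h0
    have : (1 : ℂ) = 0 := by simpa [e0] using h0
    exact one_ne_zero this
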